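/- Let g be a finite-dimensional real Lie algebra, V a finite-dimensional real inner product space with orthonormal basis e₁,…,eₙ, and r : g → End(V) a Lie algebra representation by skew-adjoint operators. Let S : U(g) → U(g) ⊗ Cl(V) be the unique ℝ-algebra homomorphism with S(ι_U(X)) = ι_U(X) ⊗ 1 + 1 ⊗ (r X)~ for all X ∈ g (which exists by the universal property of U(g)). Then the ℝ-linear endomorphism F of U(g) ⊗ Cl(V) determined by F(x ⊗ ω) = S(x)·(1 ⊗ ω) for x ∈ U(g), ω ∈ Cl(V), is a linear bijection. (This is the algebraic core of the Thom isomorphism between the semi-direct and ordinary tensor products U(g) ⊗̂ Cl(V) ≅ U(g) ⊗ Cl(V).) -/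

import Mathlib

open scoped RealInnerProductSpace TensorProduct

attribute [local instance 100] LieRing.ofAssociativeRing

/-- The quantization `Ã = −(1/4) ∑ᵢ ι(eᵢ)·ι(A eᵢ)` of an endomorphism `A` of a real
inner product space `V` inside the Clifford algebra of `V`. -/
noncomputable def quantize {V : Type*} [NormedAddCommGroup V] [InnerProductSpace ℝ V]
    {n : ℕ} (b : OrthonormalBasis (Fin n) ℝ V) (Q : QuadraticForm ℝ V)
    (A : V →ₗ[ℝ] V) : CliffordAlgebra Q :=
  -((1 : ℝ)/4) • ∑ i, CliffordAlgebra.ι Q (b i) * CliffordAlgebra.ι Q (A (b i))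

set_option maxHeartbeats 1000000
set_option synthInstance.maxHeartbeats 400000

/-- Algebraic core of the Thom isomorphism: for a representation `r` of a
finite-dimensional real Lie algebra `g` by skew-adjoint operators on a
finite-dimensional real inner product space `V`, let `S : U(g) → U(g) ⊗ Cl(V)` be the
algebra homomorphism with `S(ι_U X) = ι_U(X) ⊗ 1 + 1 ⊗ (r X)~`.  Then the linear
endomorphism `F` of `U(g) ⊗ Cl(V)` determined by `F(x ⊗ ω) = S(x)·(1 ⊗ ω)` is a
linear bijection. -/
theorem thom_map_bijective
    {g : Type*} [LieRing g] [LieAlgebra ℝ g] [Module.Finite ℝ g]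
    {V : Type*} [NormedAddCommGroup V] [InnerProductSpace ℝ V] [FiniteDimensional ℝ V]
    {n : ℕ} (b : OrthonormalBasis (Fin n) ℝ V)
    (Q : QuadraticForm ℝ V) (hQ : ∀ v : V, Q v = -⟪v, v⟫)
    (r : g →ₗ⁅ℝ⁆ Module.End ℝ V)
    (hr : ∀ (X : g) (v w : V), ⟪r X v, w⟫ = -⟪v, r X w⟫)
    (S : UniversalEnvelopingAlgebra ℝ g →ₐ[ℝ]
      UniversalEnvelopingAlgebra ℝ g ⊗[ℝ] CliffordAlgebra Q)
    (hS : ∀ X : g, S (UniversalEnvelopingAlgebra.ι ℝ X) =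
      (UniversalEnvelopingAlgebra.ι ℝ X) ⊗ₜ[ℝ] 1 + 1 ⊗ₜ[ℝ] quantize b Q (r X))
    (F : UniversalEnvelopingAlgebra ℝ g ⊗[ℝ] CliffordAlgebra Q →ₗ[ℝ]
      UniversalEnvelopingAlgebra ℝ g ⊗[ℝ] CliffordAlgebra Q)
    (hF : ∀ (x : UniversalEnvelopingAlgebra ℝ g) (ω : CliffordAlgebra Q),
      F (x ⊗ₜ[ℝ] ω) = S x * (1 ⊗ₜ[ℝ] ω)) :
    Function.Bijective F := by
  classical
  -- the generating submodule
  set M : Submodule ℝ (UniversalEnvelopingAlgebra ℝ g) :=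
    Submodule.span ℝ (insert 1 (Set.range (UniversalEnvelopingAlgebra.ι ℝ (L := g)))) with hMdef
  have h1M : (1 : UniversalEnvelopingAlgebra ℝ g) ∈ M :=
    Submodule.subset_span (Set.mem_insert _ _)
  have hιM : ∀ X : g, (UniversalEnvelopingAlgebra.ι ℝ X) ∈ M := fun X =>
    Submodule.subset_span (Set.mem_insert_of_mem _ ⟨X, rfl⟩)
  have hpow_mono : Monotone (fun k => M ^ k) := by
    apply monotone_nat_of_le_succ
    intro k
    calc M ^ k = M ^ k * 1 := (mul_one _).symm
    _ ≤ M ^ k * M := mul_le_mul' le_rfl ((Submodule.one_le).2 h1M)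
    _ = M ^ (k + 1) := (pow_succ M k).symm
  -- the filtration of the tensor product
  set W : ℕ → Submodule ℝ (UniversalEnvelopingAlgebra ℝ g ⊗[ℝ] CliffordAlgebra Q) :=
    fun k => Submodule.span ℝ
      {z | ∃ u ∈ M ^ k, ∃ c : CliffordAlgebra Q, z = u ⊗ₜ[ℝ] c} with hWdef
  have hWgen : ∀ (k : ℕ) (u : UniversalEnvelopingAlgebra ℝ g), u ∈ M ^ k →
      ∀ c : CliffordAlgebra Q, u ⊗ₜ[ℝ] c ∈ W k := fun k u hu c =>
    Submodule.subset_span ⟨u, hu, c, rfl⟩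
  have hWmono : Monotone W := by
    intro i j hij
    apply Submodule.span_mono
    rintro z ⟨u, hu, c, hz⟩
    exact ⟨u, hpow_mono hij hu, c, hz⟩
  -- right multiplication by `1 ⊗ ω` preserves `W k`
  have hWmulr : ∀ (k : ℕ) (ω : CliffordAlgebra Q)
      (z : UniversalEnvelopingAlgebra ℝ g ⊗[ℝ] CliffordAlgebra Q), z ∈ W k →
      z * ((1 : UniversalEnvelopingAlgebra ℝ g) ⊗ₜ[ℝ] ω) ∈ W k := by
    intro k ω z hz
    induction hz using Submodule.span_induction with
    | mem z hz =>
      obtain ⟨u, hu, c, rfl⟩ := hz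
      rw [Algebra.TensorProduct.tmul_mul_tmul, mul_one]
      exact hWgen k u hu _
    | zero => rw [zero_mul]; exact zero_mem _
    | add x y hx hy ihx ihy => rw [add_mul]; exact add_mem ihx ihy
    | smul t x hx ih => rw [smul_mul_assoc]; exact Submodule.smul_mem _ t ih
  -- left multiplication by `a ⊗ 1`, `a ∈ M`, maps `W k` into `W (k+1)`
  have hWmull : ∀ (k : ℕ) (a : UniversalEnvelopingAlgebra ℝ g), a ∈ M →
      ∀ z ∈ W k, (a ⊗ₜ[ℝ] (1 : CliffordAlgebra Q)) * z ∈ W (k + 1) := by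
    intro k a ha z hz
    induction hz using Submodule.span_induction with
    | mem z hz =>
      obtain ⟨u, hu, c, rfl⟩ := hz
      rw [Algebra.TensorProduct.tmul_mul_tmul, one_mul]
      refine hWgen (k + 1) _ ?_ _
      rw [pow_succ']
      exact Submodule.mul_mem_mul ha hu
    | zero => rw [mul_zero]; exact zero_mem _
    | add x y hx hy ihx ihy => rw [mul_add]; exact add_mem ihx ihy
    | smul t x hx ih => rw [mul_smul_comm]; exact Submodule.smul_mem _ t ih
  -- left multiplication by `1 ⊗ c` preserves `W k`
  have hWmulc : ∀ (k : ℕ) (c : CliffordAlgebra Q),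
      ∀ z ∈ W k, ((1 : UniversalEnvelopingAlgebra ℝ g) ⊗ₜ[ℝ] c) * z ∈ W k := by
    intro k c z hz
    induction hz using Submodule.span_induction with
    | mem z hz =>
      obtain ⟨u, hu, d, rfl⟩ := hz
      rw [Algebra.TensorProduct.tmul_mul_tmul, one_mul]
      exact hWgen k u hu _
    | zero => rw [mul_zero]; exact zero_mem _
    | add x y hx hy ihx ihy => rw [mul_add]; exact add_mem ihx ihy
    | smul t x hx ih => rw [mul_smul_comm]; exact Submodule.smul_mem _ t ih
  -- the form of `S` on elements of `M`
  have exS : ∀ a ∈ M, ∃ c : CliffordAlgebra Q,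
      S a = a ⊗ₜ[ℝ] (1 : CliffordAlgebra Q) + (1 : UniversalEnvelopingAlgebra ℝ g) ⊗ₜ[ℝ] c := by
    intro a ha
    induction ha using Submodule.span_induction with
    | mem x hx =>
      rcases hx with hx | ⟨X, rfl⟩
      · refine ⟨0, ?_⟩
        rw [hx, map_one, TensorProduct.tmul_zero, add_zero,
          Algebra.TensorProduct.one_def]
      · exact ⟨quantize b Q (r X), hS X⟩
    | zero =>
      refine ⟨0, ?_⟩
      rw [map_zero, TensorProduct.zero_tmul, TensorProduct.tmul_zero, add_zero]
    | add x y hx hy ihx ihy =>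
      obtain ⟨cx, hcx⟩ := ihx
      obtain ⟨cy, hcy⟩ := ihy
      refine ⟨cx + cy, ?_⟩
      rw [map_add, hcx, hcy, TensorProduct.add_tmul, TensorProduct.tmul_add]
      abel
    | smul t x hx ih =>
      obtain ⟨c, hc⟩ := ih
      refine ⟨t • c, ?_⟩
      rw [map_smul, hc, smul_add, TensorProduct.smul_tmul', ← TensorProduct.tmul_smul]
  -- the key estimate : `S x − x ⊗ 1 ∈ W k` for `x ∈ M ^ (k+1)`
  have key : ∀ (k : ℕ) (x : UniversalEnvelopingAlgebra ℝ g), x ∈ M ^ (k + 1) →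
      S x - x ⊗ₜ[ℝ] (1 : CliffordAlgebra Q) ∈ W k := by
    intro k
    induction k with
    | zero =>
      intro x hx
      rw [pow_one] at hx
      obtain ⟨c, hc⟩ := exS x hx
      rw [hc, add_sub_cancel_left]
      have h1 : (1 : UniversalEnvelopingAlgebra ℝ g) ∈ M ^ 0 := by
        rw [pow_zero]; exact (Submodule.one_le).1 le_rfl
      exact hWgen 0 1 h1 c
    | succ k ih =>
      intro x hx
      rw [pow_succ'] at hx
      refine Submodule.mul_induction_on hx ?_ ?_
      · intro a ha y hy
        obtain ⟨c, hc⟩ := exS a ha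
        have hy' : S y - y ⊗ₜ[ℝ] (1 : CliffordAlgebra Q) ∈ W k := ih y hy
        have e : S (a * y) - (a * y) ⊗ₜ[ℝ] (1 : CliffordAlgebra Q)
            = (a ⊗ₜ[ℝ] (1 : CliffordAlgebra Q)) * (S y - y ⊗ₜ[ℝ] 1)
              + ((1 : UniversalEnvelopingAlgebra ℝ g) ⊗ₜ[ℝ] c) * (S y - y ⊗ₜ[ℝ] 1)
              + y ⊗ₜ[ℝ] c := by
          rw [map_mul, hc, add_mul, mul_sub, mul_sub]
          simp only [Algebra.TensorProduct.tmul_mul_tmul, one_mul, mul_one]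
          abel
        rw [e]
        refine add_mem (add_mem ?_ ?_) ?_
        · exact hWmull k a ha _ hy'
        · exact hWmono (Nat.le_succ k) (hWmulc k c _ hy')
        · exact hWgen (k + 1) y hy c
      · intro x₁ x₂ ih₁ ih₂
        have e : S (x₁ + x₂) - (x₁ + x₂) ⊗ₜ[ℝ] (1 : CliffordAlgebra Q)
            = (S x₁ - x₁ ⊗ₜ[ℝ] 1) + (S x₂ - x₂ ⊗ₜ[ℝ] 1) := by
          rw [map_add, TensorProduct.add_tmul]; abel
        rw [e]; exact add_mem ih₁ ih₂
  -- `F` is the identity on `W 0`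
  have FW0 : ∀ z ∈ W 0, F z = z := by
    intro z hz
    induction hz using Submodule.span_induction with
    | mem z hz =>
      obtain ⟨u, hu, c, rfl⟩ := hz
      rw [pow_zero] at hu
      obtain ⟨t, rfl⟩ := (Submodule.mem_one).1 hu
      rw [hF, AlgHom.commutes, Algebra.TensorProduct.algebraMap_apply,
        Algebra.TensorProduct.tmul_mul_tmul, mul_one, one_mul]
    | zero => rw [F.map_zero]
    | add x y hx hy ihx ihy => rw [F.map_add, ihx, ihy]
    | smul t x hx ih => rw [F.map_smul, ih]
  -- `F − id` lowers the filtration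
  have FW : ∀ (k : ℕ), ∀ z ∈ W (k + 1), F z - z ∈ W k := by
    intro k z hz
    induction hz using Submodule.span_induction with
    | mem z hz =>
      obtain ⟨u, hu, c, rfl⟩ := hz
      have e : F (u ⊗ₜ[ℝ] c) - u ⊗ₜ[ℝ] c
          = (S u - u ⊗ₜ[ℝ] (1 : CliffordAlgebra Q)) * ((1 : UniversalEnvelopingAlgebra ℝ g) ⊗ₜ[ℝ] c) := by
        rw [hF, sub_mul, Algebra.TensorProduct.tmul_mul_tmul, one_mul, mul_one]
      rw [e]
      exact hWmulr k c _ (key k u hu)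
    | zero => rw [F.map_zero, sub_zero]; exact zero_mem _
    | add x y hx hy ihx ihy =>
      have e : F (x + y) - (x + y) = (F x - x) + (F y - y) := by
        rw [F.map_add]; abel
      rw [e]; exact add_mem ihx ihy
    | smul t x hx ih =>
      have e : F (t • x) - t • x = t • (F x - x) := by
        rw [F.map_smul, smul_sub]
      rw [e]; exact Submodule.smul_mem _ t ih
  -- every element lies in some `W k`
  have hU : ∀ x : UniversalEnvelopingAlgebra ℝ g, ∃ k, x ∈ M ^ k := by
    have hsurj : Function.Surjective (UniversalEnvelopingAlgebra.mkAlgHom ℝ g) :=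
      RingCon.mkₐ_surjective _
    intro x
    obtain ⟨t, rfl⟩ := hsurj x
    induction t using TensorAlgebra.induction with
    | algebraMap t =>
      refine ⟨0, ?_⟩
      rw [AlgHom.commutes, pow_zero]
      exact (Submodule.mem_one).2 ⟨t, rfl⟩
    | ι x =>
      refine ⟨1, ?_⟩
      rw [pow_one]
      exact hιM x
    | mul a c iha ihc =>
      obtain ⟨i, hi⟩ := iha
      obtain ⟨j, hj⟩ := ihc
      refine ⟨i + j, ?_⟩
      rw [map_mul, pow_add]
      exact Submodule.mul_mem_mul hi hj
    | add a c iha ihc =>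
      obtain ⟨i, hi⟩ := iha
      obtain ⟨j, hj⟩ := ihc
      refine ⟨max i j, ?_⟩
      rw [map_add]
      exact add_mem (hpow_mono (le_max_left i j) hi) (hpow_mono (le_max_right i j) hj)
  have mem_W : ∀ z : UniversalEnvelopingAlgebra ℝ g ⊗[ℝ] CliffordAlgebra Q,
      ∃ k, z ∈ W k := by
    intro z
    induction z using TensorProduct.induction_on with
    | zero => exact ⟨0, zero_mem _⟩
    | tmul x ω =>
      obtain ⟨k, hk⟩ := hU x
      exact ⟨k, hWgen k x hk ω⟩
    | add x y ihx ihy =>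
      obtain ⟨i, hi⟩ := ihx
      obtain ⟨j, hj⟩ := ihy
      exact ⟨max i j, add_mem (hWmono (le_max_left i j) hi) (hWmono (le_max_right i j) hj)⟩
  -- injectivity
  have hinj0 : ∀ (k : ℕ), ∀ z ∈ W k, F z = 0 → z = 0 := by
    intro k
    induction k with
    | zero =>
      intro z hz h0
      rw [← FW0 z hz, h0]
    | succ k ih =>
      intro z hz h0
      have hz' : z ∈ W k := by
        have h := FW k z hz
        rw [h0, zero_sub] at h
        exact (neg_mem_iff).1 h
      exact ih z hz' h0
  constructor
  · intro x y hxy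
    obtain ⟨k, hk⟩ := mem_W (x - y)
    have h0 : F (x - y) = 0 := by rw [F.map_sub, hxy, sub_self]
    exact sub_eq_zero.1 (hinj0 k _ hk h0)
  · -- surjectivity
    have hsur0 : ∀ (k : ℕ), ∀ y ∈ W k, ∃ x, F x = y := by
      intro k
      induction k with
      | zero => intro y hy; exact ⟨y, FW0 y hy⟩
      | succ k ih =>
        intro y hy
        obtain ⟨x', hx'⟩ := ih _ (FW k y hy)
        refine ⟨y - x', ?_⟩
        rw [F.map_sub, hx']
        abel
    intro y
    obtain ⟨k, hk⟩ := mem_W y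
    exact hsur0 k y hk
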